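/- Let n ≥ 2k ≥ 4, 4 ≤ b ≤ k+1, let A = F([2,b]) ∪ F({1,b}) ⊆ C([n],k), and let X ⊆ [2,n] with |X| = d and X ∩ [2,b] = ∅. Then the number of members of A disjoint from X equals C(n−d−1, k−1) − C(n−d−b, k−1) + C(n−b−d, k−b+1). -/

import Mathlib

/-- The `i`-th smallest element (0-indexed) of a finite set of naturals. -/
def nth (A : Finset ℕ) (i : ℕ) : ℕ := (Finset.sort A (· ≤ ·)).getD i 0

lemma nth_mem (S : Finset ℕ) (j : ℕ) (h : j < S.card) : nth S j ∈ S := by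
  unfold nth
  have hl : j < (Finset.sort S (· ≤ ·)).length := by rwa [Finset.length_sort]
  rw [List.getD_eq_getElem _ _ hl]
  exact (Finset.mem_sort _).mp (List.getElem_mem hl)

lemma card_filter_eq (S : Finset ℕ) (p : ℕ → Prop) [DecidablePred p] :
    (S.filter p).card = ((Finset.sort S (· ≤ ·)).filter (fun x => p x)).length := by
  have h1 : ((Finset.sort S (· ≤ ·)).filter (fun x => p x)).toFinset = S.filter p := by
    rw [List.toFinset_filter, Finset.sort_toFinset]
    simp
  rw [← h1, List.toFinset_card_of_nodup ((S.sort_nodup _).filter _)]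

lemma sorted_mono {l : List ℕ} (hs : l.Pairwise (· < ·)) {i j : ℕ} (hij : i ≤ j)
    (hj : j < l.length) : l[i]'(lt_of_le_of_lt hij hj) ≤ l[j] := by
  rcases eq_or_lt_of_le hij with rfl | h
  · rfl
  · exact le_of_lt (List.pairwise_iff_getElem.mp hs i j _ hj h)

lemma nth_le_iff (S : Finset ℕ) (m j : ℕ) (hj : j < S.card) :
    nth S j ≤ m ↔ j + 1 ≤ (S.filter (· ≤ m)).card := by
  set l := Finset.sort S (· ≤ ·) with hl
  have hlen : l.length = S.card := Finset.length_sort _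
  have hs : l.Pairwise (· < ·) := S.sortedLT_sort.pairwise
  have hjl : j < l.length := by omega
  have hnth : nth S j = l[j] := List.getD_eq_getElem _ _ hjl
  rw [card_filter_eq S (· ≤ m), ← hl, hnth]
  constructor
  · intro h
    have htake : (l.take (j+1)).filter (fun x => x ≤ m) = l.take (j+1) := by
      apply List.filter_eq_self.mpr
      intro x hx
      obtain ⟨i, hi, rfl⟩ := List.mem_iff_getElem.mp hx
      rw [List.getElem_take]
      have hij : i ≤ j := by
        have := hi
        simp [List.length_take] at this
        omega
      simp only [decide_eq_true_eq]
      exact le_trans (sorted_mono hs hij hjl) h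
    have hsub : ((l.take (j+1)).filter (fun x => x ≤ m)).Sublist (l.filter (fun x => x ≤ m)) :=
      List.Sublist.filter _ (List.take_sublist _ _)
    have := hsub.length_le
    rw [htake] at this
    rw [List.length_take] at this
    omega
  · intro h
    by_contra hc
    push_neg at hc
    have hdrop : (l.drop j).filter (fun x => x ≤ m) = [] := by
      apply List.filter_eq_nil_iff.mpr
      intro x hx
      obtain ⟨i, hi, rfl⟩ := List.mem_iff_getElem.mp hx
      have hji : j + i < l.length := by simp at hi; omega
      rw [List.getElem_drop]
      simp only [decide_eq_true_eq, not_le]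
      calc m < l[j] := hc
        _ ≤ l[j + i]'hji := sorted_mono hs (by omega) hji
    have hsplit : l.filter (fun x => x ≤ m)
        = (l.take j).filter (fun x => x ≤ m) ++ (l.drop j).filter (fun x => x ≤ m) := by
      rw [← List.filter_append, List.take_append_drop]
    rw [hsplit, List.length_append, hdrop] at h
    have h2 := List.length_filter_le (fun x => decide (x ≤ m)) (l.take j)
    rw [List.length_take] at h2
    simp at h
    omega

/-- For X ⊆ [2,n] with |X| = d and X ∩ [2,b] = ∅, the number of members of
A = F([2,b]) ∪ F(1,b) disjoint from X equals
C(n-d-1,k-1) - C(n-d-b,k-1) + C(n-b-d,k-b+1). -/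
theorem stmt_16 (n k b d : ℕ) (hn : 2 * k ≤ n) (hk : 2 ≤ k)
    (hb : 4 ≤ b) (hbk : b ≤ k + 1)
    (X : Finset ℕ) (hX : X ⊆ Finset.Icc 2 n) (hXd : X.card = d)
    (hXb : X ∩ Finset.Icc 2 b = ∅) :
    ((Finset.Icc 1 n).powerset.filter
      (fun S => S.card = k ∧
        ((∀ j < b - 1, nth S j ≤ j + 2) ∨ (nth S 0 = 1 ∧ nth S 1 ≤ b)) ∧
        S ∩ X = ∅)).card
    = Nat.choose (n - d - 1) (k - 1) - Nat.choose (n - d - b) (k - 1)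
        + Nat.choose (n - b - d) (k + 1 - b) := by
  have hbn : b ≤ n := by omega
  have hXsub : X ⊆ Finset.Icc (b+1) n := by
    intro x hx
    have h1 := hX hx
    simp only [Finset.mem_Icc] at h1 ⊢
    have h2 : x ∉ Finset.Icc 2 b := by
      intro hc
      have : x ∈ X ∩ Finset.Icc 2 b := Finset.mem_inter.mpr ⟨hx, hc⟩
      rw [hXb] at this
      exact absurd this (Finset.notMem_empty x)
    simp only [Finset.mem_Icc] at h2
    omega
  -- key characterization of the condition
  have key : ∀ S ∈ (Finset.Icc 1 n).powerset,
      ((S.card = k ∧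
        ((∀ j < b - 1, nth S j ≤ j + 2) ∨ (nth S 0 = 1 ∧ nth S 1 ≤ b)) ∧
        S ∩ X = ∅)
      ↔ ((S.card = k ∧ S ∩ X = ∅ ∧ 1 ∈ S ∧ (S ∩ Finset.Icc 2 b).Nonempty)
        ∨ (S.card = k ∧ S ∩ X = ∅ ∧ 1 ∉ S ∧ Finset.Icc 2 b ⊆ S))) := by
    intro S hSp
    rw [Finset.mem_powerset] at hSp
    constructor
    · rintro ⟨hcard, hcond, hint⟩
      -- helper: from nth S 1 ≤ b and 1 ∈ S, get nonempty intersection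
      have hne : ∀ (h1 : 1 ∈ S), nth S 1 ≤ b → (S ∩ Finset.Icc 2 b).Nonempty := by
        intro h1 hnth
        have h2 : 2 ≤ (S.filter (· ≤ b)).card :=
          (nth_le_iff S b 1 (by omega)).mp hnth
        obtain ⟨x, hx, y, hy, hxy⟩ := Finset.one_lt_card.mp h2
        rcases eq_or_ne x 1 with rfl | hx1
        · refine ⟨y, Finset.mem_inter.mpr ⟨(Finset.mem_filter.mp hy).1, ?_⟩⟩
          have hyS := (Finset.mem_filter.mp hy).1
          have := hSp hyS
          simp only [Finset.mem_Icc] at this ⊢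
          have := (Finset.mem_filter.mp hy).2
          have hy1 : y ≠ 1 := fun h => hxy h.symm
          omega
        · refine ⟨x, Finset.mem_inter.mpr ⟨(Finset.mem_filter.mp hx).1, ?_⟩⟩
          have hxS := (Finset.mem_filter.mp hx).1
          have := hSp hxS
          simp only [Finset.mem_Icc] at this ⊢
          have := (Finset.mem_filter.mp hx).2
          omega
      rcases hcond with hA | hB
      · by_cases h1 : 1 ∈ S
        · left
          refine ⟨hcard, hint, h1, hne h1 ?_⟩
          have := hA 1 (by omega)
          omega
        · right
          refine ⟨hcard, hint, h1, ?_⟩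
          have hnth : nth S (b-2) ≤ b := by
            have := hA (b-2) (by omega)
            omega
          have hcnt : b - 1 ≤ (S.filter (· ≤ b)).card :=
            by have := (nth_le_iff S b (b-2) (by omega)).mp hnth; omega
          have hsub : S.filter (· ≤ b) ⊆ Finset.Icc 2 b := by
            intro x hx
            have hxS := (Finset.mem_filter.mp hx).1
            have h2 := hSp hxS
            simp only [Finset.mem_Icc] at h2 ⊢
            have := (Finset.mem_filter.mp hx).2
            have : x ≠ 1 := fun h => h1 (h ▸ hxS)
            have := (Finset.mem_filter.mp hx).2
            omega
          have heq : S.filter (· ≤ b) = Finset.Icc 2 b := by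
            apply Finset.eq_of_subset_of_card_le hsub
            rw [Nat.card_Icc]
            omega
          rw [← heq]
          exact Finset.filter_subset _ _
      · left
        have h1 : 1 ∈ S := by
          have := nth_mem S 0 (by omega)
          rwa [hB.1] at this
        exact ⟨hcard, hint, h1, hne h1 hB.2⟩
    · rintro (⟨hcard, hint, h1, x, hx⟩ | ⟨hcard, hint, h1, hsub⟩)
      · refine ⟨hcard, Or.inr ⟨?_, ?_⟩, hint⟩
        · -- nth S 0 = 1
          have hle : nth S 0 ≤ 1 := by
            rw [nth_le_iff S 1 0 (by omega)]
            have : 1 ∈ S.filter (· ≤ 1) := Finset.mem_filter.mpr ⟨h1, le_refl 1⟩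
            exact Finset.card_pos.mpr ⟨1, this⟩
          have hmem := nth_mem S 0 (by omega)
          have := hSp hmem
          simp only [Finset.mem_Icc] at this
          omega
        · rw [nth_le_iff S b 1 (by omega)]
          rw [Finset.mem_inter, Finset.mem_Icc] at hx
          apply Finset.one_lt_card.mpr
          refine ⟨1, Finset.mem_filter.mpr ⟨h1, by omega⟩,
            x, Finset.mem_filter.mpr ⟨hx.1, by omega⟩, by omega⟩
      · refine ⟨hcard, Or.inl ?_, hint⟩
        intro j hj
        rw [nth_le_iff S (j+2) j (by omega)]
        have hsub2 : Finset.Icc 2 (j+2) ⊆ S.filter (· ≤ j+2) := by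
          intro y hy
          simp only [Finset.mem_Icc] at hy
          refine Finset.mem_filter.mpr ⟨hsub ?_, by omega⟩
          simp only [Finset.mem_Icc]
          omega
        have := Finset.card_le_card hsub2
        rw [Nat.card_Icc] at this
        omega
  rw [Finset.filter_congr key, Finset.filter_or]
  have hdisj : Disjoint
      ((Finset.Icc 1 n).powerset.filter
        (fun S => S.card = k ∧ S ∩ X = ∅ ∧ 1 ∈ S ∧ (S ∩ Finset.Icc 2 b).Nonempty))
      ((Finset.Icc 1 n).powerset.filter
        (fun S => S.card = k ∧ S ∩ X = ∅ ∧ 1 ∉ S ∧ Finset.Icc 2 b ⊆ S)) := by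
    apply Finset.disjoint_filter_filter'
    rw [disjoint_iff_inf_le]
    rintro S ⟨⟨_, _, h1, _⟩, ⟨_, _, h2, _⟩⟩
    exact absurd h1 h2
  rw [Finset.card_union_of_disjoint hdisj]
  -- card of Q (with 1 ∈ S, no intersection condition)
  have hQ : ((Finset.Icc 1 n).powerset.filter
      (fun S => S.card = k ∧ S ∩ X = ∅ ∧ 1 ∈ S)).card
      = Nat.choose (n - 1 - d) (k - 1) := by
    have hcardE : (Finset.Icc 2 n \ X).card = n - 1 - d := by
      rw [Finset.card_sdiff_of_subset hX, Nat.card_Icc, hXd]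
      omega
    rw [← hcardE, ← Finset.card_powersetCard]
    refine Finset.card_bij' (fun S _ => S.erase 1) (fun T _ => insert 1 T) ?_ ?_ ?_ ?_
    · rintro S hS
      rw [Finset.mem_filter, Finset.mem_powerset] at hS
      obtain ⟨hSp, hcard, hint, h1⟩ := hS
      apply Finset.mem_powersetCard.mpr
      constructor
      · intro x hx
        rw [Finset.mem_erase] at hx
        rw [Finset.mem_sdiff]
        constructor
        · have := hSp hx.2
          simp only [Finset.mem_Icc] at this ⊢
          have := hx.1
          omega
        · intro hc
          have : x ∈ S ∩ X := Finset.mem_inter.mpr ⟨hx.2, hc⟩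
          rw [hint] at this
          exact absurd this (Finset.notMem_empty x)
      · rw [Finset.card_erase_of_mem h1, hcard]
    · rintro T hT
      rw [Finset.mem_powersetCard] at hT
      obtain ⟨hTsub, hTcard⟩ := hT
      have h1T : (1 : ℕ) ∉ T := by
        intro hc
        have := hTsub hc
        rw [Finset.mem_sdiff, Finset.mem_Icc] at this
        omega
      rw [Finset.mem_filter, Finset.mem_powerset]
      refine ⟨?_, ?_, ?_, Finset.mem_insert_self 1 T⟩
      · intro x hx
        rcases Finset.mem_insert.mp hx with rfl | hx
        · simp only [Finset.mem_Icc]; omega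
        · have := hTsub hx
          rw [Finset.mem_sdiff, Finset.mem_Icc] at this
          simp only [Finset.mem_Icc]
          omega
      · rw [Finset.card_insert_of_notMem h1T, hTcard]
        omega
      · apply Finset.eq_empty_iff_forall_notMem.mpr
        intro x hx
        rw [Finset.mem_inter] at hx
        rcases Finset.mem_insert.mp hx.1 with rfl | hxT
        · have := hX hx.2
          rw [Finset.mem_Icc] at this
          omega
        · have := hTsub hxT
          rw [Finset.mem_sdiff] at this
          exact this.2 hx.2
    · rintro S hS
      rw [Finset.mem_filter] at hS
      exact Finset.insert_erase hS.2.2.2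
    · rintro T hT
      rw [Finset.mem_powersetCard] at hT
      apply Finset.erase_insert
      intro hc
      have := hT.1 hc
      rw [Finset.mem_sdiff, Finset.mem_Icc] at this
      omega
  have hQ' : ((Finset.Icc 1 n).powerset.filter
      (fun S => S.card = k ∧ S ∩ X = ∅ ∧ 1 ∈ S ∧ (S ∩ Finset.Icc 2 b) = ∅)).card
      = Nat.choose (n - b - d) (k - 1) := by
    have hcardE : (Finset.Icc (b+1) n \ X).card = n - b - d := by
      rw [Finset.card_sdiff_of_subset hXsub, Nat.card_Icc, hXd]
      omega
    rw [← hcardE, ← Finset.card_powersetCard]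
    refine Finset.card_bij' (fun S _ => S.erase 1) (fun T _ => insert 1 T) ?_ ?_ ?_ ?_
    · rintro S hS
      rw [Finset.mem_filter, Finset.mem_powerset] at hS
      obtain ⟨hSp, hcard, hint, h1, hib⟩ := hS
      apply Finset.mem_powersetCard.mpr
      constructor
      · intro x hx
        rw [Finset.mem_erase] at hx
        rw [Finset.mem_sdiff]
        have hxb : x ∉ Finset.Icc 2 b := by
          intro hc
          have : x ∈ S ∩ Finset.Icc 2 b := Finset.mem_inter.mpr ⟨hx.2, hc⟩
          rw [hib] at this
          exact absurd this (Finset.notMem_empty x)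
        rw [Finset.mem_Icc] at hxb
        constructor
        · have := hSp hx.2
          simp only [Finset.mem_Icc] at this ⊢
          have := hx.1
          omega
        · intro hc
          have : x ∈ S ∩ X := Finset.mem_inter.mpr ⟨hx.2, hc⟩
          rw [hint] at this
          exact absurd this (Finset.notMem_empty x)
      · rw [Finset.card_erase_of_mem h1, hcard]
    · rintro T hT
      rw [Finset.mem_powersetCard] at hT
      obtain ⟨hTsub, hTcard⟩ := hT
      have hTb : ∀ x ∈ T, b + 1 ≤ x ∧ x ≤ n ∧ x ∉ X := by
        intro x hx
        have := hTsub hx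
        rw [Finset.mem_sdiff, Finset.mem_Icc] at this
        exact ⟨this.1.1, this.1.2, this.2⟩
      have h1T : (1 : ℕ) ∉ T := by
        intro hc
        have := (hTb 1 hc).1
        omega
      rw [Finset.mem_filter, Finset.mem_powerset]
      refine ⟨?_, ?_, ?_, Finset.mem_insert_self 1 T, ?_⟩
      · intro x hx
        rcases Finset.mem_insert.mp hx with rfl | hx
        · simp only [Finset.mem_Icc]; omega
        · have := hTb x hx
          simp only [Finset.mem_Icc]
          omega
      · rw [Finset.card_insert_of_notMem h1T, hTcard]
        omega
      · apply Finset.eq_empty_iff_forall_notMem.mpr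
        intro x hx
        rw [Finset.mem_inter] at hx
        rcases Finset.mem_insert.mp hx.1 with rfl | hxT
        · have := hX hx.2
          rw [Finset.mem_Icc] at this
          omega
        · exact (hTb x hxT).2.2 hx.2
      · apply Finset.eq_empty_iff_forall_notMem.mpr
        intro x hx
        rw [Finset.mem_inter, Finset.mem_Icc] at hx
        rcases Finset.mem_insert.mp hx.1 with rfl | hxT
        · omega
        · have := (hTb x hxT).1
          omega
    · rintro S hS
      rw [Finset.mem_filter] at hS
      exact Finset.insert_erase hS.2.2.2.1
    · rintro T hT
      rw [Finset.mem_powersetCard] at hT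
      apply Finset.erase_insert
      intro hc
      have := hT.1 hc
      rw [Finset.mem_sdiff, Finset.mem_Icc] at this
      omega
  have hP1 : ((Finset.Icc 1 n).powerset.filter
      (fun S => S.card = k ∧ S ∩ X = ∅ ∧ 1 ∈ S ∧ (S ∩ Finset.Icc 2 b).Nonempty)).card
      = Nat.choose (n - 1 - d) (k - 1) - Nat.choose (n - b - d) (k - 1) := by
    have hsplit := Finset.card_filter_add_card_filter_not
      (s := (Finset.Icc 1 n).powerset.filter (fun S => S.card = k ∧ S ∩ X = ∅ ∧ 1 ∈ S))
      (p := fun S => (S ∩ Finset.Icc 2 b).Nonempty)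
    rw [Finset.filter_filter, Finset.filter_filter] at hsplit
    have e1 : ((Finset.Icc 1 n).powerset.filter
        (fun S => (S.card = k ∧ S ∩ X = ∅ ∧ 1 ∈ S) ∧ (S ∩ Finset.Icc 2 b).Nonempty))
        = ((Finset.Icc 1 n).powerset.filter
        (fun S => S.card = k ∧ S ∩ X = ∅ ∧ 1 ∈ S ∧ (S ∩ Finset.Icc 2 b).Nonempty)) := by
      apply Finset.filter_congr
      intro S _
      constructor
      · rintro ⟨⟨a, b, c⟩, d⟩; exact ⟨a, b, c, d⟩
      · rintro ⟨a, b, c, d⟩; exact ⟨⟨a, b, c⟩, d⟩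
    have e2 : ((Finset.Icc 1 n).powerset.filter
        (fun S => (S.card = k ∧ S ∩ X = ∅ ∧ 1 ∈ S) ∧ ¬(S ∩ Finset.Icc 2 b).Nonempty))
        = ((Finset.Icc 1 n).powerset.filter
        (fun S => S.card = k ∧ S ∩ X = ∅ ∧ 1 ∈ S ∧ (S ∩ Finset.Icc 2 b) = ∅)) := by
      apply Finset.filter_congr
      intro S _
      rw [Finset.not_nonempty_iff_eq_empty]
      constructor
      · rintro ⟨⟨a, b, c⟩, d⟩; exact ⟨a, b, c, d⟩
      · rintro ⟨a, b, c, d⟩; exact ⟨⟨a, b, c⟩, d⟩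
    rw [e1, e2, hQ, hQ'] at hsplit
    omega
  have hP0 : ((Finset.Icc 1 n).powerset.filter
      (fun S => S.card = k ∧ S ∩ X = ∅ ∧ 1 ∉ S ∧ Finset.Icc 2 b ⊆ S)).card
      = Nat.choose (n - b - d) (k + 1 - b) := by
    have hcardE : (Finset.Icc (b+1) n \ X).card = n - b - d := by
      rw [Finset.card_sdiff_of_subset hXsub, Nat.card_Icc, hXd]
      omega
    rw [← hcardE, ← Finset.card_powersetCard]
    refine Finset.card_bij' (fun S _ => S \ Finset.Icc 2 b) (fun T _ => T ∪ Finset.Icc 2 b) ?_ ?_ ?_ ?_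
    · rintro S hS
      rw [Finset.mem_filter, Finset.mem_powerset] at hS
      obtain ⟨hSp, hcard, hint, h1, hsub⟩ := hS
      apply Finset.mem_powersetCard.mpr
      constructor
      · intro x hx
        rw [Finset.mem_sdiff, Finset.mem_Icc] at hx
        rw [Finset.mem_sdiff]
        constructor
        · have := hSp hx.1
          simp only [Finset.mem_Icc] at this ⊢
          have hx1 : x ≠ 1 := fun h => h1 (h ▸ hx.1)
          have := hx.2
          omega
        · intro hc
          have : x ∈ S ∩ X := Finset.mem_inter.mpr ⟨hx.1, hc⟩
          rw [hint] at this
          exact absurd this (Finset.notMem_empty x)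
      · rw [Finset.card_sdiff_of_subset hsub, Nat.card_Icc, hcard]
        omega
    · rintro T hT
      rw [Finset.mem_powersetCard] at hT
      obtain ⟨hTsub, hTcard⟩ := hT
      have hTb : ∀ x ∈ T, b + 1 ≤ x ∧ x ≤ n ∧ x ∉ X := by
        intro x hx
        have := hTsub hx
        rw [Finset.mem_sdiff, Finset.mem_Icc] at this
        exact ⟨this.1.1, this.1.2, this.2⟩
      have hdj : Disjoint T (Finset.Icc 2 b) := by
        rw [Finset.disjoint_left]
        intro x hx hc
        rw [Finset.mem_Icc] at hc
        have := (hTb x hx).1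
        omega
      rw [Finset.mem_filter, Finset.mem_powerset]
      refine ⟨?_, ?_, ?_, ?_, Finset.subset_union_right⟩
      · intro x hx
        rcases Finset.mem_union.mp hx with hx | hx
        · have := hTb x hx
          simp only [Finset.mem_Icc]
          omega
        · rw [Finset.mem_Icc] at hx
          simp only [Finset.mem_Icc]
          omega
      · rw [Finset.card_union_of_disjoint hdj, hTcard, Nat.card_Icc]
        omega
      · apply Finset.eq_empty_iff_forall_notMem.mpr
        intro x hx
        rw [Finset.mem_inter] at hx
        rcases Finset.mem_union.mp hx.1 with hxT | hxI
        · exact (hTb x hxT).2.2 hx.2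
        · have := hXsub hx.2
          rw [Finset.mem_Icc] at this hxI
          omega
      · intro hc
        rcases Finset.mem_union.mp hc with hx | hx
        · have := (hTb 1 hx).1
          omega
        · rw [Finset.mem_Icc] at hx
          omega
    · rintro S hS
      rw [Finset.mem_filter] at hS
      exact Finset.sdiff_union_of_subset hS.2.2.2.2
    · rintro T hT
      rw [Finset.mem_powersetCard] at hT
      apply Finset.union_sdiff_cancel_right
      rw [Finset.disjoint_left]
      intro x hx hc
      have := hT.1 hx
      rw [Finset.mem_sdiff, Finset.mem_Icc] at this
      rw [Finset.mem_Icc] at hc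
      omega
  rw [hP1, hP0]
  have e1 : n - 1 - d = n - d - 1 := by omega
  have e2 : n - b - d = n - d - b := by omega
  rw [e1, e2]
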